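/- Let V₃ be the digraph on vertices {1,2,3} with arcs (2,1) and (2,3) (the orientation of the path on three vertices whose middle vertex is a source). There exists a finite acyclic digraph O such that: (a) for every 2-coloring c : V(O) → Fin 2 there is an induced copy of V₃ in O all of whose vertices receive the same color (O has no V₃-free 2-coloring), and (b) there exists a 3-coloring c : V(O) → Fin 3 with no monochromatic induced copy of V₃ in which exactly one vertex of O receives color 0. -/

import Mathlib

/-- A simple digraph on vertex type `V`: no loops and no anti-parallel arcs. -/
structure Digraph' (V : Type*) : Type _ where
  Adj : V → V → Prop
  loopless : ∀ v, ¬ Adj v v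
  asymm : ∀ u v, Adj u v → ¬ Adj v u

/-- An induced copy of the digraph `F` in the digraph `D`, given by the embedding `φ`. -/
def IsInducedCopy {α β : Type*} (F : Digraph' α) (D : Digraph' β) (φ : α → β) : Prop :=
  Function.Injective φ ∧ ∀ u v : α, D.Adj (φ u) (φ v) ↔ F.Adj u v

/-- The image of `φ` is monochromatic under the coloring `c`. -/
def Monochromatic {α β : Type*} {k : ℕ} (c : β → Fin k) (φ : α → β) : Prop :=
  ∃ i : Fin k, ∀ u : α, c (φ u) = i

/-- The coloring `c` of `D` is `F`-free: no induced copy of `F` in `D` is monochromatic. -/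
def IsFFreeColoring {α β : Type*} (F : Digraph' α) (D : Digraph' β) {k : ℕ}
    (c : β → Fin k) : Prop :=
  ∀ φ : α → β, IsInducedCopy F D φ → ¬ Monochromatic c φ

/-- A digraph is acyclic if it contains no directed cycle. -/
def Digraph'.Acyclic {β : Type*} (D : Digraph' β) : Prop :=
  ∀ v : β, ¬ Relation.TransGen D.Adj v v

/-- The underlying simple graph of a digraph. -/
def Digraph'.underlying {V : Type*} (D : Digraph' V) : SimpleGraph V where
  Adj u v := D.Adj u v ∨ D.Adj v u
  symm := ⟨fun _ _ h => Or.symm h⟩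
  loopless := ⟨fun v (h : D.Adj v v ∨ D.Adj v v) => h.elim (D.loopless v) (D.loopless v)⟩

/-- The orientation of the path on three vertices `0, 1, 2` whose middle vertex `1`
is a source: arcs `(1, 0)` and `(1, 2)`. -/
def V3source : Digraph' (Fin 3) where
  Adj u v := (u = 1 ∧ v = 0) ∨ (u = 1 ∧ v = 2)
  loopless := by decide
  asymm := by decide

/-- Adjacency matrix of our witness digraph. -/
def Omat : Fin 8 → Fin 8 → Bool := ![
  ![false, true, true, false, false, false, true, true],
  ![false, false, false, false, false, false, true, true],
  ![false, false, false, true, true, true, true, true],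
  ![false, false, false, false, false, true, true, false],
  ![false, false, false, false, false, true, false, true],
  ![false, false, false, false, false, false, false, false],
  ![false, false, false, false, false, false, false, false],
  ![false, false, false, false, false, false, false, false]]

/-- The witness digraph. -/
def Odig : Digraph' (Fin 8) where
  Adj u v := Omat u v = true
  loopless := by decide
  asymm := by decide

instance : DecidableRel Odig.Adj :=
  fun u v => inferInstanceAs (Decidable (Omat u v = true))

instance : DecidableRel V3source.Adj :=
  fun u v => inferInstanceAs (Decidable ((u = 1 ∧ v = 0) ∨ (u = 1 ∧ v = 2)))

lemma Odig_lt : ∀ u v : Fin 8, Odig.Adj u v → u < v := by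
  show ∀ u v : Fin 8, Omat u v = true → u < v
  decide

lemma Odig_acyclic : Odig.Acyclic := by
  have key : ∀ a b : Fin 8, Relation.TransGen Odig.Adj a b → a < b := by
    intro a b h
    induction h with
    | single h => exact Odig_lt _ _ h
    | tail _ h ih => exact lt_trans ih (Odig_lt _ _ h)
  exact fun v h => lt_irrefl v (key v v h)


lemma copy_of (a b d : Fin 8) {k : ℕ} (c' : Fin 8 → Fin k)
    (hinj : Function.Injective ![b, a, d])
    (hiff : ∀ u v : Fin 3, Odig.Adj (![b, a, d] u) (![b, a, d] v) ↔ V3source.Adj u v)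
    (h1 : c' b = c' a) (h2 : c' d = c' a) :
    ∃ φ : Fin 3 → Fin 8, IsInducedCopy V3source Odig φ ∧ Monochromatic c' φ :=
  ⟨![b, a, d], ⟨hinj, hiff⟩, c' a, fun u => by fin_cases u; exacts [h1, rfl, h2]⟩

set_option synthInstance.maxSize 2000 in
set_option synthInstance.maxHeartbeats 1000000 in
lemma colorA : ∀ x0 x1 x2 x3 x4 x5 x6 x7 : Fin 2,
    (x1 = x0 ∧ x2 = x0) ∨ (x6 = x0 ∧ x7 = x0) ∨ (x6 = x1 ∧ x7 = x1) ∨ (x3 = x2 ∧ x4 = x2) ∨ (x3 = x2 ∧ x7 = x2) ∨ (x4 = x2 ∧ x6 = x2) ∨ (x5 = x2 ∧ x6 = x2) ∨ (x5 = x2 ∧ x7 = x2) ∨ (x6 = x2 ∧ x7 = x2) ∨ (x5 = x3 ∧ x6 = x3) ∨ (x5 = x4 ∧ x7 = x4) := by decide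

/-- The good 3-coloring. -/
def cgood : Fin 8 → Fin 3 := ![0, 2, 2, 1, 1, 2, 1, 1]

lemma cgood_B : ∀ a b d : Fin 8, b ≠ d → Odig.Adj a b → Odig.Adj a d →
    ¬ Odig.Adj b d → ¬ Odig.Adj d b → ¬ (cgood b = cgood a ∧ cgood d = cgood a) := by
  decide

/-- There is a finite acyclic digraph `O` such that (a) every `2`-coloring of `O` has a
monochromatic induced copy of `V₃` (no `V₃`-free `2`-coloring), and (b) there is a
`V₃`-free `3`-coloring of `O` in which exactly one vertex receives color `0`. -/
theorem statement1 :
    ∃ (m : ℕ) (O : Digraph' (Fin m)), O.Acyclic ∧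
      (∀ c : Fin m → Fin 2, ∃ φ : Fin 3 → Fin m,
        IsInducedCopy V3source O φ ∧ Monochromatic c φ) ∧
      (∃ c : Fin m → Fin 3, IsFFreeColoring V3source O c ∧ ∃! x : Fin m, c x = 0) := by
  refine ⟨8, Odig, Odig_acyclic, ?_, ?_⟩
  · intro cc
    rcases colorA (cc 0) (cc 1) (cc 2) (cc 3) (cc 4) (cc 5) (cc 6) (cc 7) with
      h | h | h | h | h | h | h | h | h | h | h
    · exact copy_of 0 1 2 cc (by decide) (by decide) h.1 h.2
    · exact copy_of 0 6 7 cc (by decide) (by decide) h.1 h.2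
    · exact copy_of 1 6 7 cc (by decide) (by decide) h.1 h.2
    · exact copy_of 2 3 4 cc (by decide) (by decide) h.1 h.2
    · exact copy_of 2 3 7 cc (by decide) (by decide) h.1 h.2
    · exact copy_of 2 4 6 cc (by decide) (by decide) h.1 h.2
    · exact copy_of 2 5 6 cc (by decide) (by decide) h.1 h.2
    · exact copy_of 2 5 7 cc (by decide) (by decide) h.1 h.2
    · exact copy_of 2 6 7 cc (by decide) (by decide) h.1 h.2
    · exact copy_of 3 5 6 cc (by decide) (by decide) h.1 h.2
    · exact copy_of 4 5 7 cc (by decide) (by decide) h.1 h.2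
  · refine ⟨cgood, ?_, 0, rfl, ?_⟩
    · rintro φ ⟨hinj, hiff⟩ ⟨i, hi⟩
      refine cgood_B (φ 1) (φ 0) (φ 2) (fun h => ?_) ?_ ?_ ?_ ?_
        ⟨(hi 0).trans (hi 1).symm, (hi 2).trans (hi 1).symm⟩
      · exact absurd (hinj h) (by decide)
      · exact (hiff 1 0).2 (by decide)
      · exact (hiff 1 2).2 (by decide)
      · exact fun h => absurd ((hiff 0 2).1 h) (by decide)
      · exact fun h => absurd ((hiff 2 0).1 h) (by decide)
    · decide
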